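/- Delivering the mean plan at every fraction is at least as good as any time-varying plan for the expected-value robust model: with a finite scenario set Ω, probability weights p : Ω → ℝ, p_ω ≥ 0, ∑_{ω∈Ω} p_ω = 1, matrices A(ω) ∈ ℝ^{N×M}, vectors x_0, d ∈ ℝ^N, a symmetric positive semidefinite matrix D ∈ ℝ^{N×N}, any T-tuple of plans (u_0, …, u_{T-1}) in ℝ^M, and ū = (1/T) ∑_{t=0}^{T-1} u_t, it holds that ∑_{(ω_1,…,ω_T) ∈ Ω^T} (∏_{t=1}^{T} p_{ω_t}) ‖x_0 + ∑_{t=0}^{T-1} A(ω_{t+1}) ū − d‖²_D ≤ ∑_{(ω_1,…,ω_T) ∈ Ω^T} (∏_{t=1}^{T} p_{ω_t}) ‖x_0 + ∑_{t=0}^{T-1} A(ω_{t+1}) u_t − d‖²_D. -/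

import Mathlib

open Matrix

section Aux

variable {N : ℕ}

lemma sum_dp {ι : Type*} (s : Finset ι) (f : ι → Fin N → ℝ) (y : Fin N → ℝ) :
    (∑ k ∈ s, f k) ⬝ᵥ y = ∑ k ∈ s, f k ⬝ᵥ y := by
  simp only [dotProduct, Finset.sum_apply, Finset.sum_mul]
  exact Finset.sum_comm

lemma dp_sum {ι : Type*} (s : Finset ι) (x : Fin N → ℝ) (f : ι → Fin N → ℝ) :
    x ⬝ᵥ (∑ k ∈ s, f k) = ∑ k ∈ s, x ⬝ᵥ f k := by
  simp only [dotProduct, Finset.sum_apply, Finset.mul_sum]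
  exact Finset.sum_comm

lemma mv_sum {M : ℕ} {ι : Type*} (s : Finset ι) (A : Matrix (Fin N) (Fin M) ℝ)
    (f : ι → Fin M → ℝ) :
    A.mulVec (∑ k ∈ s, f k) = ∑ k ∈ s, A.mulVec (f k) := by
  simpa only [Matrix.mulVecLin_apply] using map_sum A.mulVecLin f s

variable (D : Matrix (Fin N) (Fin N) ℝ)

lemma quad_symm (hD : D.IsSymm) (x y : Fin N → ℝ) :
    x ⬝ᵥ D.mulVec y = y ⬝ᵥ D.mulVec x := by
  rw [Matrix.dotProduct_mulVec, ← Matrix.mulVec_transpose, hD.eq, dotProduct_comm]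

lemma quad_two_mul_le (hD : D.IsSymm) (hpsd : ∀ v : Fin N → ℝ, 0 ≤ v ⬝ᵥ D.mulVec v)
    (x y : Fin N → ℝ) :
    2 * (x ⬝ᵥ D.mulVec y) ≤ x ⬝ᵥ D.mulVec x + y ⬝ᵥ D.mulVec y := by
  have h := hpsd (x - y)
  have hxy : (x - y) ⬝ᵥ D.mulVec (x - y)
      = x ⬝ᵥ D.mulVec x + y ⬝ᵥ D.mulVec y - 2 * (x ⬝ᵥ D.mulVec y) := by
    rw [Matrix.mulVec_sub, dotProduct_sub, sub_dotProduct, sub_dotProduct,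
      quad_symm D hD y x]
    ring
  linarith [hxy ▸ h]

lemma quad_sum_le {T : ℕ} (hD : D.IsSymm) (hpsd : ∀ v : Fin N → ℝ, 0 ≤ v ⬝ᵥ D.mulVec v)
    (v : Fin T → (Fin N → ℝ)) :
    (∑ k, v k) ⬝ᵥ D.mulVec (∑ k, v k) ≤ (T : ℝ) * ∑ k, v k ⬝ᵥ D.mulVec (v k) := by
  have hexp : (∑ k, v k) ⬝ᵥ D.mulVec (∑ k, v k)
      = ∑ j, ∑ k, (v j) ⬝ᵥ D.mulVec (v k) := by
    rw [sum_dp]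
    refine Finset.sum_congr rfl fun j _ => ?_
    rw [mv_sum, dp_sum]
  rw [hexp]
  have h2 : ∀ j k : Fin T, (v j) ⬝ᵥ D.mulVec (v k)
      ≤ ((v j) ⬝ᵥ D.mulVec (v j) + (v k) ⬝ᵥ D.mulVec (v k)) / 2 := fun j k => by
    have := quad_two_mul_le D hD hpsd (v j) (v k)
    linarith
  calc ∑ j, ∑ k, (v j) ⬝ᵥ D.mulVec (v k)
      ≤ ∑ j : Fin T, ∑ k : Fin T,
        ((v j) ⬝ᵥ D.mulVec (v j) + (v k) ⬝ᵥ D.mulVec (v k)) / 2 :=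
        Finset.sum_le_sum fun j _ => Finset.sum_le_sum fun k _ => h2 j k
    _ = (T : ℝ) * ∑ k, v k ⬝ᵥ D.mulVec (v k) := by
        have expand : ∀ j : Fin T, (∑ k : Fin T,
            ((v j) ⬝ᵥ D.mulVec (v j) + (v k) ⬝ᵥ D.mulVec (v k)) / 2)
            = ((T : ℝ) * ((v j) ⬝ᵥ D.mulVec (v j)) + ∑ k, (v k) ⬝ᵥ D.mulVec (v k)) / 2 := by
          intro j
          rw [← Finset.sum_div, Finset.sum_add_distrib, Finset.sum_const,
            Finset.card_univ, Fintype.card_fin, nsmul_eq_mul]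
        rw [Finset.sum_congr rfl (fun j _ => expand j), ← Finset.sum_div,
          Finset.sum_add_distrib, ← Finset.mul_sum, Finset.sum_const,
          Finset.card_univ, Fintype.card_fin, nsmul_eq_mul]
        ring

end Aux

set_option maxHeartbeats 1000000 in
theorem stmt_5 {N M T : ℕ} (hT : 0 < T) {Ω : Type*} [Fintype Ω]
    (p : Ω → ℝ) (hp0 : ∀ ω, 0 ≤ p ω) (hp1 : ∑ ω, p ω = 1)
    (A : Ω → Matrix (Fin N) (Fin M) ℝ)
    (x0 d : Fin N → ℝ)
    (D : Matrix (Fin N) (Fin N) ℝ) (hD : D.IsSymm)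
    (hpsd : ∀ v : Fin N → ℝ, 0 ≤ v ⬝ᵥ D.mulVec v)
    (u : Fin T → (Fin M → ℝ)) :
    (∑ ω : Fin T → Ω, (∏ t, p (ω t)) *
      ((x0 + ∑ t, (A (ω t)).mulVec ((T : ℝ)⁻¹ • ∑ k, u k) - d) ⬝ᵥ
        D.mulVec (x0 + ∑ t, (A (ω t)).mulVec ((T : ℝ)⁻¹ • ∑ k, u k) - d)))
    ≤ ∑ ω : Fin T → Ω, (∏ t, p (ω t)) *
      ((x0 + ∑ t, (A (ω t)).mulVec (u t) - d) ⬝ᵥ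
        D.mulVec (x0 + ∑ t, (A (ω t)).mulVec (u t) - d)) := by
  haveI : NeZero T := ⟨hT.ne'⟩
  have hTR : (T : ℝ) ≠ 0 := Nat.cast_ne_zero.mpr hT.ne'
  set Q : (Fin N → ℝ) → ℝ := fun v => v ⬝ᵥ D.mulVec v with hQ
  set w : (Fin T → Ω) → Fin T → (Fin N → ℝ) :=
    fun ω k => x0 + (∑ t, (A (ω t)).mulVec (u (t + k))) - d with hw
  -- the mean-plan argument is the average of the shifted arguments
  have hmean : ∀ ω : Fin T → Ω,
      x0 + (∑ t, (A (ω t)).mulVec ((T : ℝ)⁻¹ • ∑ k, u k)) - d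
        = (T : ℝ)⁻¹ • ∑ k, w ω k := by
    intro ω
    have hsum : ∑ k, w ω k
        = (T : ℝ) • (x0 - d) + ∑ t, (A (ω t)).mulVec (∑ k, u k) := by
      simp only [hw]
      have h1 : ∀ t : Fin T, (∑ k : Fin T, u (t + k)) = ∑ k, u k := fun t =>
        Fintype.sum_equiv (Equiv.addLeft t) _ _ (fun k => rfl)
      have h2 : ∀ t : Fin T, (∑ k : Fin T, (A (ω t)).mulVec (u (t + k)))
          = (A (ω t)).mulVec (∑ k, u k) := fun t => by
        rw [← h1 t, mv_sum]
      calc ∑ k : Fin T, (x0 + (∑ t, (A (ω t)).mulVec (u (t + k))) - d)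
          = (∑ k : Fin T, (x0 - d)) + ∑ k : Fin T, ∑ t, (A (ω t)).mulVec (u (t + k)) := by
            rw [← Finset.sum_add_distrib]
            exact Finset.sum_congr rfl fun k _ => by abel
        _ = (T : ℝ) • (x0 - d) + ∑ t, (A (ω t)).mulVec (∑ k, u k) := by
            have hconst : (∑ _k : Fin T, (x0 - d)) = (T : ℝ) • (x0 - d) := by
              funext i
              simp [Finset.sum_apply, mul_comm]
              ring
            rw [hconst, Finset.sum_comm]
            congr 1
            exact Finset.sum_congr rfl fun t _ => h2 t
    rw [hsum]
    have h3 : ∑ t : Fin T, (A (ω t)).mulVec ((T : ℝ)⁻¹ • ∑ k, u k)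
        = (T : ℝ)⁻¹ • ∑ t : Fin T, (A (ω t)).mulVec (∑ k, u k) := by
      simp only [Matrix.mulVec_smul]
      rw [← Finset.smul_sum]
    rw [h3, smul_add, smul_smul (T : ℝ)⁻¹, inv_mul_cancel₀ hTR, one_smul]
    abel
  -- pointwise Jensen bound
  have hpt : ∀ ω : Fin T → Ω,
      Q (x0 + (∑ t, (A (ω t)).mulVec ((T : ℝ)⁻¹ • ∑ k, u k)) - d)
        ≤ (T : ℝ)⁻¹ * ∑ k, Q (w ω k) := by
    intro ω
    rw [hmean ω]
    have hsc : Q ((T : ℝ)⁻¹ • ∑ k, w ω k)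
        = (T : ℝ)⁻¹ * ((T : ℝ)⁻¹ * Q (∑ k, w ω k)) := by
      simp only [hQ, Matrix.mulVec_smul, smul_dotProduct, dotProduct_smul,
        smul_eq_mul]
    rw [hsc]
    have := quad_sum_le D hD hpsd (w ω)
    have hinv : 0 ≤ (T : ℝ)⁻¹ := by positivity
    calc (T : ℝ)⁻¹ * ((T : ℝ)⁻¹ * Q (∑ k, w ω k))
        ≤ (T : ℝ)⁻¹ * ((T : ℝ)⁻¹ * ((T : ℝ) * ∑ k, Q (w ω k))) := by
          apply mul_le_mul_of_nonneg_left (mul_le_mul_of_nonneg_left this hinv) hinv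
      _ = (T : ℝ)⁻¹ * ∑ k, Q (w ω k) := by
          field_simp
  -- shift invariance of the expectation
  have hshift : ∀ k : Fin T,
      (∑ ω : Fin T → Ω, (∏ t, p (ω t)) * Q (w ω k))
        = ∑ ω : Fin T → Ω, (∏ t, p (ω t)) *
            Q (x0 + (∑ t, (A (ω t)).mulVec (u t)) - d) := by
    intro k
    apply Fintype.sum_equiv ((Equiv.addRight k).arrowCongr (Equiv.refl Ω))
    intro ω
    have hprod : (∏ t, p (ω t)) = ∏ t, p (ω (t - k)) :=
      (Fintype.prod_equiv (Equiv.subRight k) _ _ (fun t => rfl)).symm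
    have hvec : (∑ t : Fin T, (A (ω t)).mulVec (u (t + k)))
        = ∑ t : Fin T, (A (ω (t - k))).mulVec (u t) := by
      apply Fintype.sum_equiv (Equiv.addRight k)
      intro t
      simp
    simp only [hw, Equiv.arrowCongr_apply, Equiv.refl_symm, Equiv.coe_refl,
      Function.comp, Equiv.addRight_symm, Equiv.coe_addRight, id_eq]
    rw [hprod, hvec]
    simp only [sub_eq_add_neg]
  -- combine
  calc (∑ ω : Fin T → Ω, (∏ t, p (ω t)) *
      Q (x0 + (∑ t, (A (ω t)).mulVec ((T : ℝ)⁻¹ • ∑ k, u k)) - d))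
      ≤ ∑ ω : Fin T → Ω, (∏ t, p (ω t)) * ((T : ℝ)⁻¹ * ∑ k, Q (w ω k)) := by
        refine Finset.sum_le_sum fun ω _ => ?_
        exact mul_le_mul_of_nonneg_left (hpt ω)
          (Finset.prod_nonneg fun t _ => hp0 (ω t))
    _ = ∑ ω : Fin T → Ω, ∑ k : Fin T, (T : ℝ)⁻¹ * ((∏ t, p (ω t)) * Q (w ω k)) := by
        refine Finset.sum_congr rfl fun ω _ => ?_
        simp only [Finset.mul_sum]
        exact Finset.sum_congr rfl fun k _ => by ring
    _ = ∑ k : Fin T, ∑ ω : Fin T → Ω, (T : ℝ)⁻¹ * ((∏ t, p (ω t)) * Q (w ω k)) :=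
        Finset.sum_comm
    _ = (T : ℝ)⁻¹ * ∑ k : Fin T, ∑ ω : Fin T → Ω, (∏ t, p (ω t)) * Q (w ω k) := by
        rw [Finset.mul_sum]
        exact Finset.sum_congr rfl fun k _ => (Finset.mul_sum _ _ _).symm
    _ = ∑ ω : Fin T → Ω, (∏ t, p (ω t)) *
          Q (x0 + (∑ t, (A (ω t)).mulVec (u t)) - d) := by
        rw [Finset.sum_congr rfl fun k _ => hshift k, Finset.sum_const,
          Finset.card_univ, Fintype.card_fin, nsmul_eq_mul, ← mul_assoc,
          inv_mul_cancel₀ hTR, one_mul]
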